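/- Fix an agent a with true preference r_a and an outside option demotion strategy d_a. If y is a deterministic rank-minimizing assignment for (r_a, p_{-a}) with y_{ao} = 1 for some o with R(o, r_a) < R(∅, r_a) (i.e., a receives a truly acceptable type), then y is also a deterministic rank-minimizing assignment for (d_a, p_{-a}). -/

import Mathlib

open Finset
open scoped Classical

variable {A O : Type*}

/-- A strict preference ranking: a bijection from object types to positions. -/
abbrev Pref (O : Type*) [Fintype O] := O ≃ Fin (Fintype.card O)

/-- The rank of object `o` under ranking `p` (1 = best). -/
def rk [Fintype O] (p : Pref O) (o : O) : ℕ := (p o : ℕ) + 1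

/-- A (probabilistic) assignment. -/
def IsAssignment [Fintype A] [Fintype O] (q : O → ℕ) (x : A → O → ℝ) : Prop :=
  (∀ a o, 0 ≤ x a o ∧ x a o ≤ 1) ∧ (∀ a, ∑ o, x a o = 1) ∧ (∀ o, ∑ a, x a o ≤ (q o : ℝ))

def IsDeterministic [Fintype A] [Fintype O] (x : A → O → ℝ) : Prop :=
  ∀ a o, x a o = 0 ∨ x a o = 1

/-- The rank value (sum of expected ranks). -/
def RV [Fintype A] [Fintype O] (p : A → Pref O) (x : A → O → ℝ) : ℝ :=
  ∑ a, ∑ o, (rk (p a) o : ℝ) * x a o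

/-- `x` is a rank-minimizing assignment for profile `p`. -/
def RankMin [Fintype A] [Fintype O] (q : O → ℕ) (p : A → Pref O) (x : A → O → ℝ) : Prop :=
  IsAssignment q x ∧ ∀ y, IsAssignment q y → RV p x ≤ RV p y

/-- `x` is wasteful for profile `p`. -/
def Wasteful [Fintype A] [Fintype O] (q : O → ℕ) (p : A → Pref O) (x : A → O → ℝ) : Prop :=
  ∃ o o' a, (∑ a', x a' o) < (q o : ℝ) ∧ 0 < x a o' ∧ rk (p a) o < rk (p a) o'

/-- `k̄(p_a)`: the minimal `k` such that the types ranked at or above `k` have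
total capacity at least `|A|`. -/
noncomputable def kbar [Fintype O] (nA : ℕ) (q : O → ℕ) (p : Pref O) : ℕ :=
  sInf {k | nA ≤ ∑ o ∈ Finset.univ.filter (fun o => rk p o ≤ k), q o}

/-- A deterministic assignment, viewed as a map from agents to objects, is feasible. -/
def DetOK [Fintype A] [Fintype O] (q : O → ℕ) (d : A → O) : Prop :=
  ∀ o, (Finset.univ.filter (fun a => d a = o)).card ≤ q o

/-- The 0-1 matrix of a deterministic assignment. -/
noncomputable def detMat [Fintype A] [Fintype O] (d : A → O) : A → O → ℝ :=
  fun a o => if d a = o then 1 else 0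

/-- The set of deterministic rank-minimizing assignments for `p`
(minimizing over all probabilistic assignments). -/
noncomputable def Ystar [Fintype A] [Fintype O] (q : O → ℕ) (p : A → Pref O) :
    Finset (A → O) :=
  Finset.univ.filter
    (fun d => DetOK q d ∧ ∀ x, IsAssignment q x → RV p (detMat d) ≤ RV p x)

/-- The uniform rank-minimizing mechanism. -/
noncomputable def fU [Fintype A] [Fintype O] (q : O → ℕ) (p : A → Pref O) : A → O → ℝ :=
  fun a o => (∑ d ∈ Ystar q p, detMat d a o) / (Ystar q p).card

/-- Agent `a` (with true ranking `r`) weakly prefers `x` to `x'`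
(first-order stochastic dominance). -/
def WeakPrefAt [Fintype A] [Fintype O] (r : Pref O) (a : A) (x x' : A → O → ℝ) : Prop :=
  ∀ j : ℕ, ∑ o ∈ Finset.univ.filter (fun o => rk r o ≤ j), x' a o ≤
           ∑ o ∈ Finset.univ.filter (fun o => rk r o ≤ j), x a o

/-- Agent `a` strictly prefers `x` to `x'`. -/
def StrictPrefAt [Fintype A] [Fintype O] (r : Pref O) (a : A) (x x' : A → O → ℝ) : Prop :=
  WeakPrefAt r a x x' ∧ ∃ j : ℕ, j < Fintype.card O ∧
    ∑ o ∈ Finset.univ.filter (fun o => rk r o ≤ j), x' a o <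
    ∑ o ∈ Finset.univ.filter (fun o => rk r o ≤ j), x a o

/-- `d` is an outside option demotion strategy for true ranking `r`. -/
def ODS [Fintype O] (null : O) (r d : Pref O) : Prop :=
  (∀ o, rk r o < rk r null → rk d o = rk r o) ∧ rk d null = Fintype.card O

/-- The refusal map `g`: each agent keeps probability on truly acceptable types
and moves all remaining mass to the null type. -/
noncomputable def refuse [Fintype A] [Fintype O] (null : O) (r : A → Pref O)
    (x : A → O → ℝ) : A → O → ℝ :=
  fun a o =>
    if rk (r a) o < rk (r a) null then x a o
    else if o = null then
      ∑ o' ∈ Finset.univ.filter (fun o' => rk (r a) null ≤ rk (r a) o'), x a o'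
    else 0

/-- Equal treatment of equals for a mechanism. -/
def SatisfiesETE [Fintype A] [Fintype O] (q : O → ℕ)
    (f : (A → Pref O) → A → O → ℝ) : Prop :=
  ∀ (p : A → Pref O) (a a' : A),
    (∀ o, rk (p a) o ≤ kbar (Fintype.card A) q (p a) → p a' o = p a o) →
    ∀ o, f p a o = f p a' o


section AuxODS
variable {A O : Type*}

lemma ods_key [Fintype O] (null : O) (ra da : Pref O) (h : ODS null ra da) :
    ∀ o, rk ra null ≤ rk ra o → rk ra null ≤ rk da o := by
  intro o ho
  by_contra hlt
  push_neg at hlt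
  set o' := ra.symm (da o) with ho'
  have h1 : rk ra o' = rk da o := by simp [rk, ho']
  have h2 : rk ra o' < rk ra null := h1 ▸ hlt
  have h3 : rk da o' = rk da o := (h.1 o' h2).trans h1
  have h4 : da o' = da o := by
    have := Nat.succ_injective h3
    exact Fin.ext this
  have h5 : o' = o := da.injective h4
  rw [h5] at h2
  exact absurd h2 (not_lt.mpr ho)

lemma detMat_rv_row [Fintype A] [Fintype O] (d : A → O) (a : A) (c : O → ℝ) :
    ∑ o, c o * detMat d a o = c (d a) := by
  simp only [detMat, mul_ite, mul_one, mul_zero]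
  rw [Finset.sum_ite_eq]
  simp

end AuxODS

/-- Claim 1: a deterministic rank-minimizing assignment for the truthful
profile that gives `a` a truly acceptable type is also rank-minimizing for the profile
where `a` reveals an ODS. -/
theorem stmt10 [Fintype A] [Fintype O] [DecidableEq A]
    (q : O → ℕ) (null : O) (hnull : Fintype.card A ≤ q null)
    (a : A) (ra da : Pref O) (hods : ODS null ra da)
    (p : A → Pref O) (d : A → O)
    (hd : d ∈ Ystar q (Function.update p a ra))
    (o : O) (hdo : d a = o) (hacc : rk ra o < rk ra null) :
    d ∈ Ystar q (Function.update p a da) := by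
  classical
  simp only [Ystar, Finset.mem_filter, Finset.mem_univ, true_and] at hd ⊢
  obtain ⟨hdet, hmin⟩ := hd
  refine ⟨hdet, ?_⟩
  intro y hy
  obtain ⟨hb, hr, hc⟩ := hy
  set P := Function.update p a ra with hP
  set P' := Function.update p a da with hP'
  have hPa : P a = ra := Function.update_self a ra p
  have hP'a : P' a = da := Function.update_self a da p
  have hPne : ∀ a', a' ≠ a → P a' = p a' := fun a' h => Function.update_of_ne h ra p
  have hP'ne : ∀ a', a' ≠ a → P' a' = p a' := fun a' h => Function.update_of_ne h da p
  set c : O → Prop := fun o' => rk ra o' < rk ra null with hcdef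
  set S : ℝ := ∑ o' ∈ Finset.univ.filter (fun o' => ¬ c o'), y a o' with hS
  set row : O → ℝ := fun o' => if c o' then y a o' else if o' = null then S else 0 with hrow
  set y' : A → O → ℝ := Function.update y a row with hy'def
  have hy'a : y' a = row := Function.update_self a row y
  have hy'ne : ∀ a', a' ≠ a → y' a' = y a' := fun a' h => Function.update_of_ne h row y
  have hSnn : 0 ≤ S := Finset.sum_nonneg fun o' _ => (hb a o').1
  have hSle : S ≤ 1 := by
    have h := Finset.sum_le_sum_of_subset_of_nonneg
        (Finset.filter_subset (fun o' => ¬ c o') Finset.univ) (fun o' _ _ => (hb a o').1)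
    exact h.trans (le_of_eq (hr a))
  have hnullc : ¬ c null := by simp [hcdef]
  -- bounds for y'
  have hb' : ∀ a' o', 0 ≤ y' a' o' ∧ y' a' o' ≤ 1 := by
    intro a' o'
    by_cases h : a' = a
    · rw [h, hy'a, hrow]
      by_cases h1 : c o'
      · simp only [h1, if_true]; exact hb a o'
      · simp only [h1, if_false]
        by_cases h2 : o' = null
        · simp [h2, hSnn, hSle]
        · simp [h2]
    · rw [hy'ne a' h]; exact hb a' o'
  -- row sums for y'
  have hr' : ∀ a', ∑ o', y' a' o' = 1 := by
    intro a'
    by_cases h : a' = a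
    · rw [h, hy'a]
      rw [← Finset.sum_filter_add_sum_filter_not Finset.univ c]
      have e1 : ∑ o' ∈ Finset.univ.filter c, row o' = ∑ o' ∈ Finset.univ.filter c, y a o' := by
        apply Finset.sum_congr rfl
        intro o' ho'
        rw [Finset.mem_filter] at ho'
        simp [hrow, ho'.2]
      have e2 : ∑ o' ∈ Finset.univ.filter (fun o' => ¬ c o'), row o' = S := by
        have : ∀ o' ∈ Finset.univ.filter (fun o' => ¬ c o'), row o' = if o' = null then S else 0 := by
          intro o' ho'
          rw [Finset.mem_filter] at ho'
          simp [hrow, ho'.2]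
        rw [Finset.sum_congr rfl this, Finset.sum_ite_eq' _ null (fun _ => S)]
        simp [hnullc]
      rw [e1, e2, hS, Finset.sum_filter_add_sum_filter_not]
      exact hr a
    · rw [hy'ne a' h]; exact hr a'
  -- column sums for y'
  have hc' : ∀ o', ∑ a', y' a' o' ≤ (q o' : ℝ) := by
    intro o'
    by_cases h : o' = null
    · rw [h]
      calc ∑ a', y' a' null ≤ ∑ a' : A, (1 : ℝ) :=
            Finset.sum_le_sum fun a' _ => (hb' a' null).2
        _ = (Fintype.card A : ℝ) := by rw [Finset.sum_const, Finset.card_univ, nsmul_eq_mul, mul_one]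
        _ ≤ (q null : ℝ) := by exact_mod_cast hnull
    · calc ∑ a', y' a' o' ≤ ∑ a', y a' o' := by
            apply Finset.sum_le_sum
            intro a' _
            by_cases h2 : a' = a
            · rw [h2, hy'a, hrow]
              by_cases h3 : c o'
              · simp [h3]
              · simp [h3, h, (hb a o').1]
            · rw [hy'ne a' h2]
        _ ≤ (q o' : ℝ) := hc o'
  have hy'ass : IsAssignment q y' := ⟨hb', hr', hc'⟩
  -- RV P' (detMat d) = RV P (detMat d)
  have hRVd : RV P' (detMat d) = RV P (detMat d) := by
    unfold RV
    rw [← Finset.add_sum_erase Finset.univ _ (Finset.mem_univ a),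
        ← Finset.add_sum_erase Finset.univ
          (fun a' => ∑ o', ((rk (P a') o' : ℝ)) * detMat d a' o') (Finset.mem_univ a)]
    congr 1
    · rw [hPa, hP'a, detMat_rv_row, detMat_rv_row, hdo]
      have : rk da o = rk ra o := hods.1 o hacc
      exact_mod_cast this
    · apply Finset.sum_congr rfl
      intro a' ha'
      rw [Finset.mem_erase] at ha'
      rw [hPne a' ha'.1, hP'ne a' ha'.1]
  -- RV P y' ≤ RV P' y
  have hRVy : RV P y' ≤ RV P' y := by
    unfold RV
    rw [← Finset.add_sum_erase Finset.univ _ (Finset.mem_univ a),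
        ← Finset.add_sum_erase Finset.univ
          (fun a' => ∑ o', ((rk (P' a') o' : ℝ)) * y a' o') (Finset.mem_univ a)]
    have erest : ∑ a' ∈ Finset.univ.erase a, ∑ o', ((rk (P a') o' : ℝ)) * y' a' o'
        = ∑ a' ∈ Finset.univ.erase a, ∑ o', ((rk (P' a') o' : ℝ)) * y a' o' := by
      apply Finset.sum_congr rfl
      intro a' ha'
      rw [Finset.mem_erase] at ha'
      rw [hPne a' ha'.1, hP'ne a' ha'.1, hy'ne a' ha'.1]
    rw [erest]
    refine add_le_add ?_ le_rfl
    rw [hPa, hP'a, hy'a]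
    rw [← Finset.sum_filter_add_sum_filter_not Finset.univ c
          (fun o' => ((rk ra o' : ℝ)) * row o'),
        ← Finset.sum_filter_add_sum_filter_not Finset.univ c
          (fun o' => ((rk da o' : ℝ)) * y a o')]
    apply add_le_add
    · apply le_of_eq
      apply Finset.sum_congr rfl
      intro o' ho'
      rw [Finset.mem_filter] at ho'
      have h1 : row o' = y a o' := by simp [hrow, ho'.2]
      have h2 : rk da o' = rk ra o' := hods.1 o' ho'.2
      rw [h1, h2]
    · have lhs_eq : ∑ o' ∈ Finset.univ.filter (fun o' => ¬ c o'), ((rk ra o' : ℝ)) * row o'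
          = (rk ra null : ℝ) * S := by
        have : ∀ o' ∈ Finset.univ.filter (fun o' => ¬ c o'),
            ((rk ra o' : ℝ)) * row o' = if o' = null then (rk ra null : ℝ) * S else 0 := by
          intro o' ho'
          rw [Finset.mem_filter] at ho'
          by_cases h2 : o' = null
          · rw [h2]; simp [hrow, hnullc]
          · simp [hrow, ho'.2, h2]
        rw [Finset.sum_congr rfl this, Finset.sum_ite_eq' _ null]
        simp [hnullc]
      rw [lhs_eq, hS, Finset.mul_sum]
      apply Finset.sum_le_sum
      intro o' ho'
      rw [Finset.mem_filter] at ho'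
      have h2 : rk ra null ≤ rk da o' := by
        apply ods_key null ra da hods
        exact not_lt.mp ho'.2
      apply mul_le_mul_of_nonneg_right _ (hb a o').1
      exact_mod_cast h2
  calc RV P' (detMat d) = RV P (detMat d) := hRVd
    _ ≤ RV P y' := hmin y' hy'ass
    _ ≤ RV P' y := hRVy
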